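/- Let a > 0 and b > 0. For T_δ > 0 define w(t, T_δ) = (1/b)·(1 − (a/(T_δ·b + a))·e^{-bt}) − t for t ≥ 0. Then: (i) for each fixed T_δ > 0, t ↦ w(t, T_δ) is strictly decreasing on [0,∞), satisfies w(0, T_δ) > 0 and tends to −∞ as t → ∞, hence there is a unique t0(T_δ) > 0 with w(t0(T_δ), T_δ) = 0; (ii) if 0 < T_δ < T_δ', then t0(T_δ) < t0(T_δ'). -/

import Mathlib

open MeasureTheory Real Set Filter

theorem stmt_19 (a b : ℝ) (ha : 0 < a) (hb : 0 < b)
    (w : ℝ → ℝ → ℝ)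
    (hw : ∀ t Tδ : ℝ, w t Tδ =
      (1 / b) * (1 - (a / (Tδ * b + a)) * Real.exp (-b * t)) - t) :
    (∀ Tδ : ℝ, 0 < Tδ →
      StrictAntiOn (fun t => w t Tδ) (Set.Ici 0) ∧
      0 < w 0 Tδ ∧
      Filter.Tendsto (fun t => w t Tδ) Filter.atTop Filter.atBot ∧
      ∃! t0 : ℝ, 0 < t0 ∧ w t0 Tδ = 0) ∧
    (∀ Tδ Tδ' t0 t0' : ℝ, 0 < Tδ → Tδ < Tδ' →
      0 < t0 → w t0 Tδ = 0 → 0 < t0' → w t0' Tδ' = 0 → t0 < t0') := by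
  have key : ∀ Tδ : ℝ, 0 < Tδ → StrictAntiOn (fun t => w t Tδ) (Set.Ici 0) := by
    intro Tδ hTδ s hs t ht hst
    simp only [hw]
    have hden : 0 < Tδ * b + a := by positivity
    set c := a / (Tδ * b + a) with hc
    have hc0 : 0 < c := by positivity
    have hc1 : c < 1 := (div_lt_one hden).2 (by nlinarith)
    have hs0 : (0:ℝ) ≤ s := hs
    have hes : Real.exp (-b * t) < Real.exp (-b * s) := by
      apply Real.exp_lt_exp.2; nlinarith
    have h1 : Real.exp (-b * s) ≤ 1 := Real.exp_le_one_iff.2 (by nlinarith)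
    have h2 : 1 - b * (t - s) ≤ Real.exp (-(b * (t - s))) := by
      have := Real.add_one_le_exp (-(b * (t - s))); linarith
    have h3 : Real.exp (-b * t) = Real.exp (-b * s) * Real.exp (-(b * (t - s))) := by
      rw [← Real.exp_add]; ring_nf
    have hbound : Real.exp (-b * s) - Real.exp (-b * t) ≤ b * (t - s) := by
      nlinarith [Real.exp_pos (-(b * (t - s))), Real.exp_pos (-b * s)]
    have h4 : c * (Real.exp (-b * s) - Real.exp (-b * t)) < b * (t - s) := by
      nlinarith [mul_pos (sub_pos.mpr hc1) (sub_pos.mpr hes)]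
    have h5 : (1 / b) * (c * (Real.exp (-b * s) - Real.exp (-b * t))) < t - s := by
      rw [one_div, inv_mul_lt_iff₀ hb]
      linarith [h4]
    nlinarith [h5]
  have hroot : ∀ Tδ : ℝ, 0 < Tδ → 0 < w 0 Tδ := by
    intro Tδ hTδ
    rw [hw]
    have hden : 0 < Tδ * b + a := by positivity
    have hc1 : a / (Tδ * b + a) < 1 := (div_lt_one hden).2 (by nlinarith)
    have hc0 : 0 < a / (Tδ * b + a) := by positivity
    simp [Real.exp_zero]
    nlinarith [mul_pos (inv_pos.2 hb) (sub_pos.2 hc1)]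
  have hub : ∀ Tδ : ℝ, 0 < Tδ → ∀ t : ℝ, w t Tδ ≤ 1 / b - t := by
    intro Tδ hTδ t
    rw [hw]
    have hden : 0 < Tδ * b + a := by positivity
    have hc0 : 0 < a / (Tδ * b + a) := by positivity
    nlinarith [Real.exp_pos (-b * t), one_div_pos.2 hb,
      mul_pos hc0 (Real.exp_pos (-b * t))]
  constructor
  · intro Tδ hTδ
    have hden : 0 < Tδ * b + a := by positivity
    refine ⟨key Tδ hTδ, hroot Tδ hTδ, ?_, ?_⟩
    · apply tendsto_atBot_mono (hub Tδ hTδ)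
      have h := Filter.tendsto_atBot_add_const_left Filter.atTop (1 / b)
        (tendsto_neg_atTop_atBot : Filter.Tendsto (fun t : ℝ => -t) Filter.atTop Filter.atBot)
      exact h.congr fun t => (sub_eq_add_neg _ _).symm
    · -- existence via IVT
      have hcont : ContinuousOn (fun t => w t Tδ) (Set.Icc 0 (2 / b)) := by
        have : Continuous fun t : ℝ =>
            (1 / b) * (1 - (a / (Tδ * b + a)) * Real.exp (-b * t)) - t := by
          fun_prop
        simp only [hw]; exact this.continuousOn
      have hle : (0:ℝ) ≤ 2 / b := by positivity
      have hneg : w (2 / b) Tδ ≤ 0 := by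
        have := hub Tδ hTδ (2 / b)
        have h2 : 1 / b - 2 / b < 0 := by
          rw [div_sub_div_same]; exact div_neg_of_neg_of_pos (by norm_num) hb
        linarith
      have hmem : (0:ℝ) ∈ Set.Icc (w (2 / b) Tδ) (w 0 Tδ) :=
        ⟨hneg, le_of_lt (hroot Tδ hTδ)⟩
      obtain ⟨t0, ht0mem, ht0⟩ := intermediate_value_Icc' hle hcont hmem
      have ht0pos : 0 < t0 := by
        rcases lt_or_eq_of_le ht0mem.1 with h | h
        · exact h
        · exfalso; rw [← h] at ht0; linarith [hroot Tδ hTδ]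
      refine ⟨t0, ⟨ht0pos, ht0⟩, ?_⟩
      intro t1 ⟨ht1pos, ht1⟩
      have := (key Tδ hTδ).injOn (Set.mem_Ici.2 (le_of_lt ht1pos))
        (Set.mem_Ici.2 (le_of_lt ht0pos)) (by simp [ht1, ht0])
      exact this
  · intro Tδ Tδ' t0 t0' hTδ hTT ht0pos ht0 ht0'pos ht0'
    have hTδ' : 0 < Tδ' := lt_trans hTδ hTT
    have hden : 0 < Tδ * b + a := by positivity
    have hden' : 0 < Tδ' * b + a := by positivity
    have hcc : a / (Tδ' * b + a) < a / (Tδ * b + a) := by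
      apply div_lt_div_of_pos_left ha hden
      nlinarith
    have hlt : w t0' Tδ < w t0' Tδ' := by
      rw [hw, hw]
      nlinarith [mul_pos (mul_pos (one_div_pos.2 hb) (sub_pos.2 hcc))
        (Real.exp_pos (-b * t0'))]
    rw [ht0'] at hlt
    by_contra h
    push_neg at h
    rcases lt_or_eq_of_le h with h' | h'
    · have := key Tδ hTδ (Set.mem_Ici.2 (le_of_lt ht0'pos))
        (Set.mem_Ici.2 (le_of_lt ht0pos)) h'
      simp only at this
      rw [ht0] at this
      linarith
    · rw [h'] at hlt; linarith
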